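/- With notation as in the complementarity system for the multifold conic problem, define B⁰ = {j : y^j = 0 for all (x,y) ∈ S} and N⁰ = {j : A^j x - b^j = 0 for all (x,y) ∈ S}. Then B ⊆ B⁰ and N ⊆ N⁰, where B and N are the index sets where some solution has primal slack in int K_j, respectively dual variable in int K_j⁺. -/

import Mathlib

open scoped RealInnerProductSpace

/-- Positive polar cone. -/
def posPolar {E : Type*} [NormedAddCommGroup E] [InnerProductSpace ℝ E] (K : Set E) : Set E :=
  {y | ∀ z ∈ K, 0 ≤ ⟪y, z⟫}

/-- Normal cone of convex analysis at a point. -/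
def normalCone {E : Type*} [NormedAddCommGroup E] [InnerProductSpace ℝ E] (K : Set E) (s : E) :
    Set E :=
  {v | ∀ z ∈ K, ⟪v, z - s⟫ ≤ 0}

lemma eq_zero_of_inner_interior {E : Type*} [NormedAddCommGroup E] [InnerProductSpace ℝ E]
    {U : Set E} {s v : E} (hs : s ∈ interior U) (hv : ∀ u ∈ U, 0 ≤ ⟪v, u⟫)
    (h0 : ⟪v, s⟫ = 0) : v = 0 := by
  obtain ⟨ε, hε, hball⟩ := Metric.isOpen_iff.1 isOpen_interior s hs
  set δ : ℝ := ε / (2 * (‖v‖ + 1)) with hδdef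
  have hnv : (0:ℝ) < ‖v‖ + 1 := by positivity
  have hδ : 0 < δ := by positivity
  have hmem : s - δ • v ∈ U := by
    apply interior_subset (hball ?_)
    rw [Metric.mem_ball, dist_eq_norm]
    have : s - δ • v - s = -(δ • v) := by abel
    rw [this, norm_neg, norm_smul, Real.norm_eq_abs, abs_of_pos hδ]
    have h1 : δ * ‖v‖ < δ * (‖v‖ + 1) := by nlinarith
    have h2 : δ * (‖v‖ + 1) = ε / 2 := by
      rw [hδdef, div_mul_eq_mul_div, div_eq_div_iff (by positivity) (by norm_num)]; ring
    linarith
  have h3 := hv _ hmem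
  rw [inner_sub_right, h0, real_inner_smul_right, real_inner_self_eq_norm_sq] at h3
  have : ‖v‖ = 0 := by
    by_contra hne0
    have hpos : 0 < ‖v‖ := lt_of_le_of_ne (norm_nonneg v) (Ne.symm hne0)
    nlinarith [mul_pos hδ (mul_pos hpos hpos)]
  simpa using this

theorem stmt8 {n r : ℕ} (q : Fin r → ℕ)
    (K : ∀ j, Set (EuclideanSpace ℝ (Fin (q j))))
    (hclosed : ∀ j, IsClosed (K j)) (hconv : ∀ j, Convex ℝ (K j))
    (hcone : ∀ j, ∀ (c : ℝ), 0 ≤ c → ∀ x ∈ K j, c • x ∈ K j)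
    (hint : ∀ j, (interior (K j)).Nonempty)
    (A : ∀ j, EuclideanSpace ℝ (Fin n) →ₗ[ℝ] EuclideanSpace ℝ (Fin (q j)))
    (b : ∀ j, EuclideanSpace ℝ (Fin (q j))) (c : EuclideanSpace ℝ (Fin n))
    (S : Set ((EuclideanSpace ℝ (Fin n)) × ∀ j, EuclideanSpace ℝ (Fin (q j))))
    (hS : S = {p | (∀ j, A j p.1 - b j ∈ K j) ∧ (∀ j, p.2 j ∈ posPolar (K j)) ∧
      (∀ j, ⟪p.2 j, A j p.1 - b j⟫ = 0) ∧
      ∑ j, LinearMap.adjoint (A j) (p.2 j) = c})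
    (hne : S.Nonempty) :
    (∀ j, (∃ p ∈ S, A j p.1 - b j ∈ interior (K j)) → ∀ p ∈ S, p.2 j = 0) ∧
    (∀ j, (∃ p ∈ S, p.2 j ∈ interior (posPolar (K j))) → ∀ p ∈ S, A j p.1 - b j = 0) := by
  subst hS
  -- cross complementarity
  have hAdual : ∀ p ∈ {p : (EuclideanSpace ℝ (Fin n)) × ∀ j, EuclideanSpace ℝ (Fin (q j)) |
      (∀ j, A j p.1 - b j ∈ K j) ∧ (∀ j, p.2 j ∈ posPolar (K j)) ∧
      (∀ j, ⟪p.2 j, A j p.1 - b j⟫ = 0) ∧ ∑ j, LinearMap.adjoint (A j) (p.2 j) = c},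
      ∀ (z : EuclideanSpace ℝ (Fin n)), ∑ j, ⟪p.2 j, A j z⟫ = ⟪c, z⟫ := by
    rintro p ⟨-, -, -, hsum⟩ z
    calc ∑ j, ⟪p.2 j, A j z⟫ = ∑ j, ⟪LinearMap.adjoint (A j) (p.2 j), z⟫ := by
          simp [LinearMap.adjoint_inner_left]
      _ = ⟪∑ j, LinearMap.adjoint (A j) (p.2 j), z⟫ := by rw [sum_inner]
      _ = ⟪c, z⟫ := by rw [hsum]
  have key : ∀ p ∈ {p : (EuclideanSpace ℝ (Fin n)) × ∀ j, EuclideanSpace ℝ (Fin (q j)) |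
      (∀ j, A j p.1 - b j ∈ K j) ∧ (∀ j, p.2 j ∈ posPolar (K j)) ∧
      (∀ j, ⟪p.2 j, A j p.1 - b j⟫ = 0) ∧ ∑ j, LinearMap.adjoint (A j) (p.2 j) = c},
      ∀ p' ∈ {p : (EuclideanSpace ℝ (Fin n)) × ∀ j, EuclideanSpace ℝ (Fin (q j)) |
      (∀ j, A j p.1 - b j ∈ K j) ∧ (∀ j, p.2 j ∈ posPolar (K j)) ∧
      (∀ j, ⟪p.2 j, A j p.1 - b j⟫ = 0) ∧ ∑ j, LinearMap.adjoint (A j) (p.2 j) = c},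
      ∀ j, ⟪p.2 j, A j p'.1 - b j⟫ = 0 := by
    intro p hp p' hp' j
    obtain ⟨hK, hpol, hcomp, hsum⟩ := hp
    obtain ⟨hK', hpol', hcomp', hsum'⟩ := hp'
    set F : Fin r → ℝ := fun j => ⟪p.2 j, A j p'.1 - b j⟫ + ⟪p'.2 j, A j p.1 - b j⟫ with hF
    have hFnn : ∀ j, 0 ≤ F j := fun j =>
      add_nonneg (hpol j _ (hK' j)) (hpol' j _ (hK j))
    have hbp : ∀ j, ⟪p.2 j, b j⟫ = ⟪p.2 j, A j p.1⟫ := by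
      intro j; have := hcomp j; rw [inner_sub_right] at this; linarith
    have hbp' : ∀ j, ⟪p'.2 j, b j⟫ = ⟪p'.2 j, A j p'.1⟫ := by
      intro j; have := hcomp' j; rw [inner_sub_right] at this; linarith
    have hsumF : ∑ j, F j = 0 := by
      have e1 := hAdual p ⟨hK, hpol, hcomp, hsum⟩ p'.1
      have e2 := hAdual p ⟨hK, hpol, hcomp, hsum⟩ p.1
      have e3 := hAdual p' ⟨hK', hpol', hcomp', hsum'⟩ p.1
      have e4 := hAdual p' ⟨hK', hpol', hcomp', hsum'⟩ p'.1
      have : ∑ j, F j = (∑ j, ⟪p.2 j, A j p'.1⟫ - ∑ j, ⟪p.2 j, A j p.1⟫)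
          + (∑ j, ⟪p'.2 j, A j p.1⟫ - ∑ j, ⟪p'.2 j, A j p'.1⟫) := by
        rw [hF]
        simp only [inner_sub_right]
        rw [Finset.sum_add_distrib, Finset.sum_sub_distrib, Finset.sum_sub_distrib]
        have c1 : ∑ j, ⟪p.2 j, b j⟫ = ∑ j, ⟪p.2 j, A j p.1⟫ :=
          Finset.sum_congr rfl fun j _ => hbp j
        have c2 : ∑ j, ⟪p'.2 j, b j⟫ = ∑ j, ⟪p'.2 j, A j p'.1⟫ :=
          Finset.sum_congr rfl fun j _ => hbp' j
        rw [c1, c2]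
        try ring
      rw [this, e1, e2, e3, e4]
      try ring
    have hFj : F j = 0 :=
      (Finset.sum_eq_zero_iff_of_nonneg (fun j _ => hFnn j)).1 hsumF j (Finset.mem_univ j)
    have h1 := hpol j _ (hK' j)
    have h2 := hpol' j _ (hK j)
    have hFj' : (⟪p.2 j, A j p'.1 - b j⟫ : ℝ) + ⟪p'.2 j, A j p.1 - b j⟫ = 0 := hFj
    linarith
  constructor
  · rintro j ⟨p0, hp0, hintj⟩ p hp
    have hz : ⟪p.2 j, A j p0.1 - b j⟫ = 0 := key p hp p0 hp0 j
    exact eq_zero_of_inner_interior hintj (hp.2.1 j) hz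
  · rintro j ⟨p0, hp0, hintj⟩ p hp
    have hz : ⟪p0.2 j, A j p.1 - b j⟫ = 0 := key p0 hp0 p hp j
    refine eq_zero_of_inner_interior hintj ?_ ?_
    · intro u hu
      rw [real_inner_comm]
      exact hu _ (hp.1 j)
    · rw [real_inner_comm]; exact hz
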